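/- Let (G,w) be a finite connected edge-weighted graph and X a minimum spanning tree of (G,w). Then for every λ, the connected-component partition of the λ-level graph of X equals the connected-component partition of the λ-level graph of G; consequently the quasi-flat zones hierarchies of X and of G coincide. -/

import Mathlib

open SimpleGraph

variable {V : Type*}

/-- `P'` refines `P`: every region of `P'` is contained in a region of `P`. -/
def Refines (P' P : Set (Set V)) : Prop := ∀ R ∈ P', ∃ S ∈ P, R ⊆ S

/-- `x` and `y` lie in the same region of `P`. -/
def SameRegion (P : Set (Set V)) (x y : V) : Prop := ∃ R ∈ P, x ∈ R ∧ y ∈ R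

/-- The cut of a partition `P` for the graph `G`. -/
def cutOf (G : SimpleGraph V) (P : Set (Set V)) : Set (Sym2 V) :=
  {e | e ∈ G.edgeSet ∧ ∀ x y : V, e = s(x, y) → ¬ SameRegion P x y}

/-- The `lam`-level partition of a subgraph `X`: connected components of the
`lam`-level graph `(V(X), {u ∈ E(X) : w u < lam})`, as a set of regions. -/
def levelPartition {G : SimpleGraph V} (X : G.Subgraph) {α : Type*} [LT α]
    (w : Sym2 V → α) (lam : α) : Set (Set V) :=
  {S | ∃ x ∈ X.verts,
    S = {y | Relation.ReflTransGen (fun a b => X.Adj a b ∧ w s(a, b) < lam) x y}}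

/-- The `lam`-level partition of the graph `G` itself (quasi-flat zones at level `lam`). -/
def qfz (G : SimpleGraph V) (w : Sym2 V → ℕ) (lam : ℕ) : Set (Set V) :=
  {S | ∃ x : V,
    S = {y | Relation.ReflTransGen (fun a b => G.Adj a b ∧ w s(a, b) < lam) x y}}

/-- `(P₀, …, P_l)` is a complete hierarchy on `V`. -/
def IsCompleteHierarchy (P : ℕ → Set (Set V)) (l : ℕ) : Prop :=
  (∀ i ≤ l, Setoid.IsPartition (P i)) ∧
  (∀ i, 1 ≤ i → i ≤ l → Refines (P (i - 1)) (P i)) ∧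
  (P 0 = {S | ∃ x : V, S = {x}}) ∧
  (P l = {Set.univ})

/-- A complete hierarchy all of whose regions induce connected subgraphs of `G`. -/
def IsConnectedHierarchy (G : SimpleGraph V) (P : ℕ → Set (Set V)) (l : ℕ) : Prop :=
  IsCompleteHierarchy P l ∧ ∀ i ≤ l, ∀ S ∈ P i, (G.induce S).Connected

/-- The saliency map of the hierarchy `(P₀, …, P_l)`:
`Φ(H)(u) = max {lam ≤ l : u ∈ φ(P lam)}`. -/
noncomputable def saliency (G : SimpleGraph V) (P : ℕ → Set (Set V)) (l : ℕ)
    (e : Sym2 V) : ℕ :=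
  sSup {lam | lam ≤ l ∧ e ∈ cutOf G (P lam)}

/-- `w` is a saliency map on `G`: the saliency map of some connected complete
hierarchy of depth `|E|`. -/
def IsSaliencyMap (G : SimpleGraph V) [Fintype G.edgeSet] (w : Sym2 V → ℕ) : Prop :=
  ∃ P : ℕ → Set (Set V), IsConnectedHierarchy G P G.edgeFinset.card ∧
    ∀ e ∈ G.edgeSet, w e = saliency G P G.edgeFinset.card e

/-- Total weight of a subgraph. -/
noncomputable def sgWeight [Fintype V] {G : SimpleGraph V} {α : Type*}
    [AddCommMonoid α] (X : G.Subgraph) (w : Sym2 V → α) : α :=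
  ∑ e ∈ (Set.toFinite X.edgeSet).toFinset, w e

/-- `X` is a minimum spanning tree of `(G, w)`. -/
def IsMST [Fintype V] {G : SimpleGraph V} {α : Type*} [AddCommMonoid α] [Preorder α]
    (X : G.Subgraph) (w : Sym2 V → α) : Prop :=
  X.verts = Set.univ ∧ X.Connected ∧
  ∀ Y : G.Subgraph, Y.verts = Set.univ → Y.Connected → sgWeight X w ≤ sgWeight Y w

/-- Connected subgraph gives refl-trans-gen reachability between vertices. -/
lemma subgraph_rtg_of_connected {G : SimpleGraph V} {X : G.Subgraph}
    (hc : X.Connected) {a b : V} (ha : a ∈ X.verts) (hb : b ∈ X.verts) :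
    Relation.ReflTransGen X.Adj a b := by
  have h : X.coe.Reachable ⟨a, ha⟩ ⟨b, hb⟩ := hc.preconnected ⟨a, ha⟩ ⟨b, hb⟩
  rw [reachable_iff_reflTransGen] at h
  exact Relation.ReflTransGen.lift (Subtype.val) (fun p q hpq => hpq) _ _ h

/-- A spanning subgraph whose adjacency relation connects everything is connected. -/
lemma subgraph_connected_of_rtg {G : SimpleGraph V} {Y : G.Subgraph}
    (hv : Y.verts = Set.univ) (x0 : V)
    (h : ∀ p q : V, Relation.ReflTransGen Y.Adj p q) : Y.Connected := by
  rw [Y.connected_iff]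
  refine ⟨⟨fun p q => ?_⟩, ⟨x0, by simp [hv]⟩⟩
  rw [reachable_iff_reflTransGen]
  have := Relation.ReflTransGen.lift (p := Y.coe.Adj)
    (fun z : V => (⟨z, by simp [hv]⟩ : Y.verts))
    (fun a b hab => by simp only [Subgraph.coe_adj]; exact hab) _ _ (h p.val q.val)
  exact this

/-- Key exchange lemma: every light edge of `G` has endpoints connected in the
MST `X` by edges of weight `< lam`. -/
lemma mst_key [Fintype V] {G : SimpleGraph V}
    {w : Sym2 V → NNReal} {X : G.Subgraph} (hX : IsMST X w) {lam : NNReal}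
    {a b : V} (hab : G.Adj a b) (hw : w s(a, b) < lam) :
    Relation.ReflTransGen (fun p q => X.Adj p q ∧ w s(p, q) < lam) a b := by
  classical
  by_contra hnb
  set R : V → V → Prop := fun p q => X.Adj p q ∧ w s(p, q) < lam with hR
  set S : Set V := {y | Relation.ReflTransGen R a y} with hS
  have haS : a ∈ S := Relation.ReflTransGen.refl
  have hbS : b ∉ S := hnb
  have hRsymm : Symmetric R := by
    intro p q hpq
    obtain ⟨h1, h2⟩ := hpq
    exact ⟨X.adj_symm h1, by rw [show s(q, p) = s(p, q) from Sym2.eq_swap]; exact h2⟩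
  -- a walk in X from b back to a
  have hwalk : Relation.ReflTransGen X.Adj b a :=
    subgraph_rtg_of_connected hX.2.1 (by simp [hX.1]) (by simp [hX.1])
  -- extract a boundary edge (u, v), u ∈ S, v ∉ S, with a prefix from b to v outside S
  have extract : ∀ c : V, Relation.ReflTransGen X.Adj c a → c ∉ S →
      ∃ u v : V, u ∈ S ∧ v ∉ S ∧ X.Adj u v ∧
        Relation.ReflTransGen (fun p q => X.Adj p q ∧ p ∉ S ∧ q ∉ S) c v := by
    intro c hca
    induction hca using Relation.ReflTransGen.head_induction_on with
    | refl => intro hc; exact absurd haS hc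
    | head hcd hda ih =>
      rename_i c d
      intro hc
      by_cases hd : d ∈ S
      · exact ⟨d, c, hd, hc, X.adj_symm hcd, Relation.ReflTransGen.refl⟩
      · obtain ⟨u, v, hu, hv, huv, hpre⟩ := ih hd
        exact ⟨u, v, hu, hv, huv, Relation.ReflTransGen.head ⟨hcd, hc, hd⟩ hpre⟩
  obtain ⟨u, v, hu, hv, huv, hpre⟩ := extract b hwalk hbS
  have hwuv : lam ≤ w s(u, v) := by
    by_contra hlt
    push_neg at hlt
    exact hv (hu.tail ⟨huv, hlt⟩)
  have hwab_uv : w s(a, b) < w s(u, v) := lt_of_lt_of_le hw hwuv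
  have hne : s(a, b) ≠ s(u, v) := fun h => absurd (h ▸ hwab_uv) (lt_irrefl _)
  have habX : s(a, b) ∉ X.edgeSet := by
    intro h
    rw [Subgraph.mem_edgeSet] at h
    exact hbS (Relation.ReflTransGen.single ⟨h, hw⟩)
  -- the exchanged subgraph Y = X - (u,v) + (a,b)
  set Y : G.Subgraph :=
    { verts := Set.univ
      Adj := fun p q => (X.Adj p q ∧ s(p, q) ≠ s(u, v)) ∨ s(p, q) = s(a, b)
      adj_sub := by
        rintro p q (⟨h, -⟩ | h)
        · exact X.adj_sub h
        · rw [Sym2.eq_iff] at h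
          rcases h with ⟨rfl, rfl⟩ | ⟨rfl, rfl⟩
          · exact hab
          · exact hab.symm
      edge_vert := fun _ => trivial
      symm := by
        constructor
        intro p q h
        rcases h with ⟨h1, h2⟩ | h
        · exact Or.inl ⟨X.adj_symm h1,
            by rw [show s(q, p) = s(p, q) from Sym2.eq_swap]; exact h2⟩
        · exact Or.inr ((Sym2.eq_swap).trans h) } with hY
  have hYadj : ∀ p q : V, Y.Adj p q ↔
      ((X.Adj p q ∧ s(p, q) ≠ s(u, v)) ∨ s(p, q) = s(a, b)) := fun _ _ => Iff.rfl
  -- Y connects u to v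
  have hYuv : Relation.ReflTransGen Y.Adj u v := by
    have h1 : Relation.ReflTransGen Y.Adj u a := by
      refine Relation.ReflTransGen.mono ?_ _ _ (by haveI : Std.Symm R := ⟨fun _ _ h => hRsymm h⟩; exact Std.Symm.symm _ _ hu)
      intro p q hpq
      refine Or.inl ⟨hpq.1, fun h => ?_⟩
      exact absurd (h ▸ hpq.2) (not_lt_of_ge hwuv)
    have h2 : Relation.ReflTransGen Y.Adj a b :=
      Relation.ReflTransGen.single (Or.inr rfl)
    have h3 : Relation.ReflTransGen Y.Adj b v := by
      refine Relation.ReflTransGen.mono ?_ _ _ hpre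
      intro p q hpq
      refine Or.inl ⟨hpq.1, fun h => ?_⟩
      rw [Sym2.eq_iff] at h
      rcases h with ⟨rfl, rfl⟩ | ⟨rfl, rfl⟩
      · exact hpq.2.1 hu
      · exact hpq.2.2 hu
    exact (h1.trans h2).trans h3
  have hYsymm : Symmetric Y.Adj := fun p q h => Y.adj_symm h
  -- every X-edge is traversable in Y
  have hYall : ∀ p q : V, X.Adj p q → Relation.ReflTransGen Y.Adj p q := by
    intro p q h
    by_cases he : s(p, q) = s(u, v)
    · rw [Sym2.eq_iff] at he
      rcases he with ⟨rfl, rfl⟩ | ⟨rfl, rfl⟩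
      · exact hYuv
      · exact (by haveI : Std.Symm Y.Adj := ⟨fun _ _ h => hYsymm h⟩; exact Std.Symm.symm _ _ hYuv)
    · exact Relation.ReflTransGen.single (Or.inl ⟨h, he⟩)
  have hYconn : Y.Connected := by
    refine subgraph_connected_of_rtg rfl a ?_
    intro p q
    have hX' : Relation.ReflTransGen X.Adj p q :=
      subgraph_rtg_of_connected hX.2.1 (by simp [hX.1]) (by simp [hX.1])
    induction hX' with
    | refl => exact Relation.ReflTransGen.refl
    | tail _ h2 ih => exact ih.trans (hYall _ _ h2)
  -- edge sets and weights
  have hEY : (Set.toFinite Y.edgeSet).toFinset =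
      insert s(a, b) (((Set.toFinite X.edgeSet).toFinset).erase s(u, v)) := by
    ext e
    induction e using Sym2.ind with
    | _ p q =>
      simp only [Set.Finite.mem_toFinset, Finset.mem_insert, Finset.mem_erase,
        Subgraph.mem_edgeSet, hYadj]
      tauto
  have habmem : s(a, b) ∉ ((Set.toFinite X.edgeSet).toFinset).erase s(u, v) := by
    simp only [Finset.mem_erase, Set.Finite.mem_toFinset]
    exact fun h => habX h.2
  have huvmem : s(u, v) ∈ (Set.toFinite X.edgeSet).toFinset := by
    simp only [Set.Finite.mem_toFinset, Subgraph.mem_edgeSet]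
    exact huv
  have hWY : sgWeight Y w =
      w s(a, b) + ∑ e ∈ ((Set.toFinite X.edgeSet).toFinset).erase s(u, v), w e := by
    rw [sgWeight, hEY, Finset.sum_insert habmem]
  have hWX : sgWeight X w =
      w s(u, v) + ∑ e ∈ ((Set.toFinite X.edgeSet).toFinset).erase s(u, v), w e := by
    rw [sgWeight, ← Finset.add_sum_erase _ _ huvmem]
  have hlt : sgWeight Y w < sgWeight X w := by
    rw [hWY, hWX]
    exact add_lt_add_of_lt_of_le hwab_uv le_rfl
  exact absurd (hX.2.2 Y rfl hYconn) (not_le_of_gt hlt)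

/-- the level partitions, hence the quasi-flat zones hierarchies,
of a minimum spanning tree `X` and of `G` coincide. -/
theorem mst_levelPartition_eq [Fintype V] (G : SimpleGraph V) (hG : G.Connected)
    (w : Sym2 V → NNReal) (X : G.Subgraph) (hX : IsMST X w) :
    ∀ lam : NNReal, levelPartition X w lam = levelPartition (⊤ : G.Subgraph) w lam := by
  intro lam
  have hsets : ∀ x : V,
      {y | Relation.ReflTransGen (fun a b => X.Adj a b ∧ w s(a, b) < lam) x y} =
      {y | Relation.ReflTransGen
        (fun a b => (⊤ : G.Subgraph).Adj a b ∧ w s(a, b) < lam) x y} := by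
    intro x
    ext y
    simp only [Set.mem_setOf_eq]
    constructor
    · refine Relation.ReflTransGen.mono ?_ _ _
      intro p q hpq
      exact ⟨by simpa using X.adj_sub hpq.1, hpq.2⟩
    · intro h
      induction h with
      | refl => exact Relation.ReflTransGen.refl
      | tail _ h2 ih =>
        exact ih.trans (mst_key hX (by simpa using h2.1) h2.2)
  ext S
  simp only [levelPartition, Set.mem_setOf_eq, hX.1, Subgraph.verts_top,
    Set.mem_univ, true_and]
  constructor
  · rintro ⟨x, -, rfl⟩
    exact ⟨x, hsets x⟩
  · rintro ⟨x, rfl⟩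
    exact ⟨x, (hsets x).symm⟩
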